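/- For nonnegative vectors x, y of length n with nonincreasing components, x is majorized by y if and only if there exists a lower triangular row-stochastic matrix L such that y = xL (i.e., y_i = Σ_{j≥i} x_j L_{ji}). -/

import Mathlib

open Finset Matrix

/-- Prefix sum of the first `k` components. -/
def psum {n : ℕ} (x : Fin n → ℝ) (k : ℕ) : ℝ :=
  ∑ i ∈ Finset.filter (fun i : Fin n => (i : ℕ) < k) Finset.univ, x i

/-- `x` is majorized by `y` (both assumed sorted nonincreasingly). -/
def Maj {n : ℕ} (x y : Fin n → ℝ) : Prop :=
  (∀ k, k < n → psum x k ≤ psum y k) ∧ (∑ i, x i) = ∑ i, y i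

/-- An A-transform: for `i < j` and `λ ∈ [0,1]`, replace `x i` by `x i + λ * x j`
and `x j` by `(1 - λ) * x j`. -/
def ATrans {n : ℕ} (x x' : Fin n → ℝ) : Prop :=
  ∃ (i j : Fin n) (lam : ℝ), i < j ∧ 0 ≤ lam ∧ lam ≤ 1 ∧
    x' = Function.update (Function.update x i (x i + lam * x j)) j ((1 - lam) * x j)

/-- A B-transform: for `i < j` and `λ ∈ [0,1]`, replace `y i` by `(1 - λ) * y i`
and `y j` by `y j + λ * y i`. -/
def BTrans {n : ℕ} (y y' : Fin n → ℝ) : Prop :=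
  ∃ (i j : Fin n) (lam : ℝ), i < j ∧ 0 ≤ lam ∧ lam ≤ 1 ∧
    y' = Function.update (Function.update y i ((1 - lam) * y i)) j (y j + lam * y i)

/-- Lower triangular row-stochastic matrix. -/
def LowerRS {n : ℕ} (L : Matrix (Fin n) (Fin n) ℝ) : Prop :=
  (∀ i j, 0 ≤ L i j) ∧ (∀ i j : Fin n, i < j → L i j = 0) ∧ (∀ i, ∑ j, L i j = 1)

/-- Upper triangular row-stochastic matrix. -/
def UpperRS {n : ℕ} (U : Matrix (Fin n) (Fin n) ℝ) : Prop :=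
  (∀ i j, 0 ≤ U i j) ∧ (∀ i j : Fin n, j < i → U i j = 0) ∧ (∀ i, ∑ j, U i j = 1)

lemma psum_zero' {n : ℕ} (x : Fin n → ℝ) : psum x 0 = 0 := by
  simp [psum]

lemma psum_succ' {n : ℕ} (x : Fin n → ℝ) (k : ℕ) (hk : k < n) :
    psum x (k + 1) = psum x k + x ⟨k, hk⟩ := by
  classical
  unfold psum
  rw [Finset.sum_filter, Finset.sum_filter]
  have h : ∀ i : Fin n, (if (i : ℕ) < k + 1 then x i else 0) =
      (if (i : ℕ) < k then x i else 0) + (if i = ⟨k, hk⟩ then x i else 0) := by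
    intro i
    by_cases h1 : (i : ℕ) < k
    · have : i ≠ ⟨k, hk⟩ := by intro h; subst h; simp at h1
      simp [h1, this, Nat.lt_succ_of_lt h1]
    · by_cases h2 : (i : ℕ) = k
      · have : i = ⟨k, hk⟩ := Fin.ext h2
        simp [h1, this, h2]
      · have : i ≠ ⟨k, hk⟩ := by intro h; subst h; simp at h2
        have : ¬ ((i : ℕ) < k + 1) := by omega
        simp [h1, ‹i ≠ _›, this]
  rw [Finset.sum_congr rfl (fun i _ => h i), Finset.sum_add_distrib]
  congr 1
  simp

lemma psum_stab' {n : ℕ} (x : Fin n → ℝ) (k : ℕ) (hk : n ≤ k) :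
    psum x k = ∑ i, x i := by
  unfold psum
  congr 1
  apply Finset.filter_true_of_mem
  intro i _
  exact lt_of_lt_of_le i.isLt hk

lemma clip_eq' (a b s t : ℝ) (hab : a ≤ b) (hst : s ≤ t) :
    max 0 (min b t - max a s) = min b (max a t) - min b (max a s) := by
  simp only [min_def, max_def]
  split_ifs <;> linarith

theorem stmt6 {n : ℕ} (x y : Fin n → ℝ)
    (hx0 : ∀ i, 0 ≤ x i) (hy0 : ∀ i, 0 ≤ y i)
    (hxs : Antitone x) (hys : Antitone y) :
    Maj x y ↔ ∃ L : Matrix (Fin n) (Fin n) ℝ, LowerRS L ∧ y = Matrix.vecMul x L := by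
  classical
  constructor
  · rintro ⟨hpre, htot⟩
    set S : ℕ → ℝ := psum x with hS
    set T : ℕ → ℝ := psum y with hT
    have hSsucc : ∀ k (hk : k < n), S (k + 1) = S k + x ⟨k, hk⟩ := fun k hk => psum_succ' x k hk
    have hTsucc : ∀ k (hk : k < n), T (k + 1) = T k + y ⟨k, hk⟩ := fun k hk => psum_succ' y k hk
    have hSmono : Monotone S := by
      apply monotone_nat_of_le_succ
      intro k
      by_cases hk : k < n
      · rw [hSsucc k hk]; linarith [hx0 ⟨k, hk⟩]
      · rw [hS, psum_stab' x k (by omega), psum_stab' x (k+1) (by omega)]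
    have hTmono : Monotone T := by
      apply monotone_nat_of_le_succ
      intro k
      by_cases hk : k < n
      · rw [hTsucc k hk]; linarith [hy0 ⟨k, hk⟩]
      · rw [hT, psum_stab' y k (by omega), psum_stab' y (k+1) (by omega)]
    have hS0 : S 0 = 0 := psum_zero' x
    have hT0 : T 0 = 0 := psum_zero' y
    have hSnn : ∀ k, 0 ≤ S k := fun k => hS0 ▸ hSmono (Nat.zero_le k)
    have hTnn : ∀ k, 0 ≤ T k := fun k => hT0 ▸ hTmono (Nat.zero_le k)
    have hSTn : S n = T n := by
      rw [hS, hT, psum_stab' x n le_rfl, psum_stab' y n le_rfl]; exact htot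
    have hST : ∀ k, S k ≤ T k := by
      intro k
      by_cases hk : k < n
      · exact hpre k hk
      · rw [hS, hT, psum_stab' x k (by omega), psum_stab' y k (by omega)]; exact le_of_eq htot
    -- the transport plan
    set m : ℕ → ℕ → ℝ := fun i j => max 0 (min (S (i+1)) (T (j+1)) - max (S i) (T j)) with hm
    have hmnn : ∀ i j, 0 ≤ m i j := fun i j => le_max_left _ _
    -- row sums
    have hrow : ∀ i : Fin n, ∑ j : Fin n, m i (j : ℕ) = x i := by
      intro i
      have key : ∀ j ∈ Finset.range n, m i j =
          min (S (i+1)) (max (S i) (T (j+1))) - min (S (i+1)) (max (S i) (T j)) := by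
        intro j hj
        exact clip_eq' (S i) (S (i + 1)) (T j) (T (j+1)) (hSmono (Nat.le_succ i)) (hTmono (Nat.le_succ j))
      rw [Fin.sum_univ_eq_sum_range (fun j => m i j) n, Finset.sum_congr rfl key,
        Finset.sum_range_sub (fun k => min (S (i+1)) (max (S i) (T k))) n]
      have h1 : max (S i) (T n) = T n := max_eq_right ((hST i).trans (hTmono (le_of_lt i.isLt)))
      have h2 : min (S (i+1)) (T n) = S (i+1) := min_eq_left (hSTn ▸ hSmono i.isLt)
      have h3 : max (S i) (T 0) = S i := by rw [hT0]; exact max_eq_left (hSnn i)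
      have h4 : min (S (i+1)) (S i) = S i := min_eq_right (hSmono (Nat.le_succ i))
      rw [h1, h2, h3, h4, hSsucc i i.isLt]
      ring_nf
    -- column sums
    have hcol : ∀ j : Fin n, ∑ i : Fin n, m (i : ℕ) j = y j := by
      intro j
      have key : ∀ i ∈ Finset.range n, m i j =
          min (T (j+1)) (max (T j) (S (i+1))) - min (T (j+1)) (max (T j) (S i)) := by
        intro i hi
        have : m i j = max 0 (min (T (j+1)) (S (i+1)) - max (T j) (S i)) := by
          simp only [hm]
          rw [min_comm (S (i+1)), max_comm (S i)]
        rw [this]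
        exact clip_eq' (T j) (T (j + 1)) (S i) (S (i+1)) (hTmono (Nat.le_succ j)) (hSmono (Nat.le_succ i))
      rw [Fin.sum_univ_eq_sum_range (fun i => m i j) n, Finset.sum_congr rfl key,
        Finset.sum_range_sub (fun k => min (T (j+1)) (max (T j) (S k))) n]
      have h1 : max (T j) (S n) = S n := max_eq_right (hSTn ▸ hTmono (le_of_lt j.isLt))
      have h2 : min (T (j+1)) (S n) = T (j+1) := min_eq_left (hSTn ▸ hTmono j.isLt)
      have h3 : max (T j) (S 0) = T j := by rw [hS0]; exact max_eq_left (hTnn j)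
      have h4 : min (T (j+1)) (T j) = T j := min_eq_right (hTmono (Nat.le_succ j))
      rw [h1, h2, h3, h4, hTsucc j j.isLt]
      ring_nf
    -- zero above diagonal
    have hzero : ∀ i j : Fin n, i < j → m (i : ℕ) (j : ℕ) = 0 := by
      intro i j hij
      have h1 : S (i + 1) ≤ T j := by
        calc S ((i:ℕ) + 1) ≤ S j := hSmono hij
        _ ≤ T j := hST j
      have : min (S (i+1)) (T (j+1)) - max (S i) (T j) ≤ 0 := by
        have := min_le_left (S ((i:ℕ)+1)) (T ((j:ℕ)+1))
        have := le_max_right (S (i:ℕ)) (T (j:ℕ))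
        linarith
      exact max_eq_left this
    -- zero when x i = 0
    have hxz : ∀ i : Fin n, x i = 0 → ∀ j : ℕ, m (i : ℕ) j = 0 := by
      intro i hxi j
      have h1 : S (i + 1) = S i := by rw [hSsucc i i.isLt, hxi, add_zero]
      have : min (S (i+1)) (T (j+1)) - max (S i) (T j) ≤ 0 := by
        have := min_le_left (S ((i:ℕ)+1)) (T (j+1))
        have := le_max_left (S (i:ℕ)) (T j)
        linarith
      exact max_eq_left this
    refine ⟨fun i j => if x i = 0 then (if j = i then 1 else 0) else m i j / x i, ⟨?_, ?_, ?_⟩, ?_⟩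
    · intro i j
      by_cases h : x i = 0
      · simp only [h, if_true]; split_ifs <;> norm_num
      · have hx : 0 < x i := lt_of_le_of_ne (hx0 i) (Ne.symm h)
        simp only [h, if_false]
        exact div_nonneg (hmnn _ _) hx.le
    · intro i j hij
      by_cases h : x i = 0
      · have : j ≠ i := ne_of_gt hij
        simp [h, this]
      · simp [h, hzero i j hij]
    · intro i
      by_cases h : x i = 0
      · simp [h]
      · simp only [h, if_false]
        rw [← Finset.sum_div, hrow i, div_self h]
    · funext j
      simp only [Matrix.vecMul, dotProduct]
      have : ∀ i : Fin n, x i * (if x i = 0 then (if j = i then 1 else 0) else m i j / x i) = m i j := by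
        intro i
        by_cases h : x i = 0
        · simp [h, hxz i h j]
        · rw [if_neg h]; field_simp
      rw [Finset.sum_congr rfl (fun i _ => this i), hcol j]
  · rintro ⟨L, ⟨hLnn, hLlow, hLrow⟩, hyL⟩
    have hyj : ∀ j : Fin n, y j = ∑ i, x i * L i j := by
      intro j; rw [hyL]; rfl
    constructor
    · intro k hk
      have hy_expand : psum y k = ∑ i : Fin n, x i * ∑ j ∈ Finset.filter (fun j : Fin n => (j : ℕ) < k) Finset.univ, L i j := by
        unfold psum
        rw [Finset.sum_congr rfl (fun j _ => hyj j), Finset.sum_comm]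
        exact Finset.sum_congr rfl (fun i _ => by rw [Finset.mul_sum])
      rw [hy_expand]
      have hx_expand : psum x k = ∑ i ∈ Finset.filter (fun i : Fin n => (i : ℕ) < k) Finset.univ,
          x i * ∑ j ∈ Finset.filter (fun j : Fin n => (j : ℕ) < k) Finset.univ, L i j := by
        unfold psum
        apply Finset.sum_congr rfl
        intro i hi
        simp only [Finset.mem_filter] at hi
        have : ∑ j ∈ Finset.filter (fun j : Fin n => (j : ℕ) < k) Finset.univ, L i j = 1 := by
          rw [← hLrow i]
          apply Finset.sum_subset (Finset.filter_subset _ _)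
          intro j _ hj
          simp only [Finset.mem_filter, Finset.mem_univ, true_and, not_lt] at hj
          exact hLlow i j (Fin.lt_def.mpr (by have h1 := hi.2; omega))
        rw [this, mul_one]
      rw [hx_expand]
      apply Finset.sum_le_sum_of_subset_of_nonneg (Finset.filter_subset _ _)
      intro i _ _
      exact mul_nonneg (hx0 i) (Finset.sum_nonneg fun j _ => hLnn i j)
    · rw [Finset.sum_congr rfl (fun j _ => hyj j), Finset.sum_comm]
      apply Finset.sum_congr rfl
      intro i _
      rw [← Finset.mul_sum, hLrow i, mul_one]
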